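/- Under hypotheses (F1) and (F2), for every λ > 0 the limit of (∫₀^t h_λ(τ) dτ) / t² as t → +∞ equals +∞; consequently there exists T > 0 such that ∫₀^T h_λ(τ) dτ > (λ/2)·T². -/

import Mathlib

open Real Filter Topology

/-- The piecewise function `g` from the paper: `g(t) = sqrt(1 - κ t^2)` for `|t| < sqrt(1/(3κ))`,
and `g(t) = 1/(3 sqrt(2κ) |t|) + sqrt(1/6)` for `|t| ≥ sqrt(1/(3κ))`; in particular `g` is even. -/
noncomputable def gfun (κ : ℝ) (t : ℝ) : ℝ :=
  if |t| < Real.sqrt (1 / (3 * κ)) then Real.sqrt (1 - κ * t ^ 2)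
  else 1 / (3 * Real.sqrt (2 * κ) * |t|) + Real.sqrt (1 / 6)

/-- `G(t) = ∫ s in [0,t], g(s) ds`. -/
noncomputable def Gfun (κ : ℝ) (t : ℝ) : ℝ := ∫ s in (0:ℝ)..t, gfun κ s

/-- `G⁻¹`, the inverse function of `G`. -/
noncomputable def Ginv (κ : ℝ) : ℝ → ℝ := Function.invFun (Gfun κ)

/-- The transformed nonlinearity `h_λ(s) = f(G⁻¹ s)/g(G⁻¹ s) - λ G⁻¹ s / g(G⁻¹ s) + λ s`. -/
noncomputable def hlam (κ : ℝ) (f : ℝ → ℝ) (lam : ℝ) (s : ℝ) : ℝ :=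
  f (Ginv κ s) / gfun κ (Ginv κ s) - lam * Ginv κ s / gfun κ (Ginv κ s) + lam * s

lemma c_pos : 0 < Real.sqrt (1/6) := Real.sqrt_pos.2 (by norm_num)
lemma c_sq : Real.sqrt (1/6) * Real.sqrt (1/6) = 1/6 := Real.mul_self_sqrt (by norm_num)
lemma c_le_one : Real.sqrt (1/6) ≤ 1 := by
  nlinarith [c_pos, c_sq]

lemma gfun_bounds {κ : ℝ} (hκ : 0 < κ) (t : ℝ) :
    Real.sqrt (1/6) ≤ gfun κ t ∧ gfun κ t ≤ 1 := by
  unfold gfun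
  split_ifs with h
  · have hr : Real.sqrt (1/(3*κ)) * Real.sqrt (1/(3*κ)) = 1/(3*κ) :=
      Real.mul_self_sqrt (by positivity)
    have h2 : t^2 < 1/(3*κ) := by
      have habs : 0 ≤ |t| := abs_nonneg t
      nlinarith [sq_abs t, abs_nonneg t, Real.sqrt_nonneg (1/(3*κ))]
    have h3 : κ * t^2 < 1/3 := by
      rw [div_eq_mul_inv] at h2
      have := mul_lt_mul_of_pos_left h2 hκ
      calc κ * t^2 < κ * (1 * (3*κ)⁻¹) := this
        _ = 1/3 := by field_simp
    constructor
    · apply Real.sqrt_le_sqrt; linarith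
    · exact (Real.sqrt_le_one.2 (by nlinarith [sq_nonneg t]))
  · push_neg at h
    have hrpos : 0 < Real.sqrt (1/(3*κ)) := Real.sqrt_pos.2 (by positivity)
    have htpos : 0 < |t| := lt_of_lt_of_le hrpos h
    have h2κ : 0 < Real.sqrt (2*κ) := Real.sqrt_pos.2 (by positivity)
    constructor
    · have : 0 < 1 / (3 * Real.sqrt (2*κ) * |t|) := by positivity
      linarith
    · -- key: 3 * sqrt(2κ) * sqrt(1/(3κ)) = sqrt 6
      have hprod : Real.sqrt (2*κ) * Real.sqrt (1/(3*κ)) = Real.sqrt (2/3) := by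
        rw [← Real.sqrt_mul (by positivity)]
        congr 1; field_simp
      have ha : Real.sqrt (2/3) * Real.sqrt (2/3) = 2/3 := Real.mul_self_sqrt (by norm_num)
      have hapos : 0 < Real.sqrt (2/3) := Real.sqrt_pos.2 (by norm_num)
      have hle : 1 / (3 * Real.sqrt (2*κ) * |t|) ≤ 1 / (3 * Real.sqrt (2/3)) := by
        apply one_div_le_one_div_of_le (by positivity)
        calc 3 * Real.sqrt (2/3) = 3 * (Real.sqrt (2*κ) * Real.sqrt (1/(3*κ))) := by rw [hprod]
          _ ≤ 3 * (Real.sqrt (2*κ) * |t|) := by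
              have := mul_le_mul_of_nonneg_left h (le_of_lt h2κ); nlinarith
          _ = 3 * Real.sqrt (2*κ) * |t| := by ring
      have hkey : 1 / (3 * Real.sqrt (2/3)) = Real.sqrt (1/6) := by
        rw [eq_comm, eq_div_iff (by positivity)]
        nlinarith [c_sq, c_pos, ha, hapos]
      rw [hkey] at hle
      nlinarith [c_sq, c_pos]

lemma gfun_measurable (κ : ℝ) : Measurable (gfun κ) := by
  unfold gfun
  exact Measurable.ite (measurableSet_lt measurable_abs measurable_const)
    (Real.continuous_sqrt.measurable.comp (by fun_prop))
    ((measurable_const.div (measurable_const.mul measurable_abs)).add measurable_const)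

lemma gfun_intervalIntegrable {κ : ℝ} (hκ : 0 < κ) (a b : ℝ) :
    IntervalIntegrable (gfun κ) MeasureTheory.volume a b := by
  apply IntervalIntegrable.mono_fun' (g := fun _ => (1:ℝ)) intervalIntegrable_const
    ((gfun_measurable κ).aestronglyMeasurable.restrict)
  filter_upwards with t
  rw [Real.norm_eq_abs, abs_le]
  have := gfun_bounds hκ t
  exact ⟨by nlinarith [c_pos], this.2⟩

lemma Gfun_sub {κ : ℝ} (hκ : 0 < κ) (a b : ℝ) :
    Gfun κ b - Gfun κ a = ∫ s in a..b, gfun κ s := by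
  unfold Gfun
  exact intervalIntegral.integral_interval_sub_left (gfun_intervalIntegrable hκ 0 b)
    (gfun_intervalIntegrable hκ 0 a)

lemma Gfun_sub_bounds {κ : ℝ} (hκ : 0 < κ) {a b : ℝ} (hab : a ≤ b) :
    Real.sqrt (1/6) * (b - a) ≤ Gfun κ b - Gfun κ a ∧ Gfun κ b - Gfun κ a ≤ b - a := by
  rw [Gfun_sub hκ]
  constructor
  · calc Real.sqrt (1/6) * (b - a) = ∫ _ in a..b, Real.sqrt (1/6) := by
          rw [intervalIntegral.integral_const, smul_eq_mul, mul_comm]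
      _ ≤ ∫ s in a..b, gfun κ s := by
          apply intervalIntegral.integral_mono_on hab intervalIntegrable_const
            (gfun_intervalIntegrable hκ a b)
          exact fun x _ => (gfun_bounds hκ x).1
  · calc (∫ s in a..b, gfun κ s) ≤ ∫ _ in a..b, (1:ℝ) := by
          apply intervalIntegral.integral_mono_on hab (gfun_intervalIntegrable hκ a b)
            intervalIntegrable_const
          exact fun x _ => (gfun_bounds hκ x).2
      _ = b - a := by simp

lemma Gfun_zero (κ : ℝ) : Gfun κ 0 = 0 := intervalIntegral.integral_same

lemma Gfun_strictMono {κ : ℝ} (hκ : 0 < κ) : StrictMono (Gfun κ) := by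
  intro a b hab
  have := (Gfun_sub_bounds hκ hab.le).1
  nlinarith [c_pos]

lemma Gfun_lipschitz {κ : ℝ} (hκ : 0 < κ) (a b : ℝ) : |Gfun κ b - Gfun κ a| ≤ |b - a| := by
  rcases le_total a b with h | h
  · have := Gfun_sub_bounds hκ h
    rw [abs_of_nonneg (by nlinarith [c_pos]), abs_of_nonneg (by linarith)]
    exact this.2
  · have := Gfun_sub_bounds hκ h
    rw [abs_sub_comm, abs_sub_comm b a, abs_of_nonneg (by nlinarith [c_pos]),
      abs_of_nonneg (by linarith)]
    exact this.2

lemma Gfun_continuous {κ : ℝ} (hκ : 0 < κ) : Continuous (Gfun κ) := by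
  apply LipschitzWith.continuous (K := 1)
  intro a b
  simp only [edist_dist, Real.dist_eq]
  rw [ENNReal.coe_one, one_mul]
  exact ENNReal.ofReal_le_ofReal (Gfun_lipschitz hκ b a)

lemma Gfun_surjective {κ : ℝ} (hκ : 0 < κ) : Function.Surjective (Gfun κ) := by
  intro y
  rcases le_total 0 y with hy | hy
  · have h1 : Gfun κ 0 ≤ y := by rw [Gfun_zero]; exact hy
    set b := y / Real.sqrt (1/6) with hb
    have hb0 : 0 ≤ b := div_nonneg hy (le_of_lt c_pos)
    have h2 : y ≤ Gfun κ b := by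
      have := (Gfun_sub_bounds hκ hb0).1
      rw [Gfun_zero] at this
      have : Real.sqrt (1/6) * b = y := by
        rw [hb]; field_simp
      nlinarith [(Gfun_sub_bounds hκ hb0).1, Gfun_zero κ]
    have := intermediate_value_Icc hb0 (Gfun_continuous hκ).continuousOn
    have hmem : y ∈ Set.Icc (Gfun κ 0) (Gfun κ b) := ⟨h1, h2⟩
    obtain ⟨x, _, hx⟩ := this hmem
    exact ⟨x, hx⟩
  · set b := y / Real.sqrt (1/6) with hb
    have hb0 : b ≤ 0 := div_nonpos_of_nonpos_of_nonneg hy (le_of_lt c_pos)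
    have h2 : Gfun κ b ≤ y := by
      have h3 := (Gfun_sub_bounds hκ hb0).1
      rw [Gfun_zero] at h3
      have h4 : Real.sqrt (1/6) * b = y := by rw [hb]; field_simp
      nlinarith
    have h1 : y ≤ Gfun κ 0 := by rw [Gfun_zero]; exact hy
    obtain ⟨x, _, hx⟩ := intermediate_value_Icc hb0 (Gfun_continuous hκ).continuousOn ⟨h2, h1⟩
    exact ⟨x, hx⟩

lemma Gfun_Ginv {κ : ℝ} (hκ : 0 < κ) (s : ℝ) : Gfun κ (Ginv κ s) = s :=
  Function.rightInverse_invFun (Gfun_surjective hκ) s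

lemma Ginv_Gfun {κ : ℝ} (hκ : 0 < κ) (t : ℝ) : Ginv κ (Gfun κ t) = t :=
  Function.leftInverse_invFun (Gfun_strictMono hκ).injective t

lemma Ginv_nonneg {κ : ℝ} (hκ : 0 < κ) {s : ℝ} (hs : 0 ≤ s) : 0 ≤ Ginv κ s := by
  by_contra h
  push_neg at h
  have := Gfun_strictMono hκ h
  rw [Gfun_Ginv hκ, Gfun_zero] at this
  linarith

lemma Ginv_bounds {κ : ℝ} (hκ : 0 < κ) {s : ℝ} (hs : 0 ≤ s) :
    s ≤ Ginv κ s ∧ Real.sqrt (1/6) * Ginv κ s ≤ s := by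
  have ht0 : 0 ≤ Ginv κ s := Ginv_nonneg hκ hs
  have := Gfun_sub_bounds hκ ht0
  rw [Gfun_zero, Gfun_Ginv hκ, sub_zero, sub_zero] at this
  exact ⟨this.2, this.1⟩

lemma Ginv_continuous {κ : ℝ} (hκ : 0 < κ) : Continuous (Ginv κ) := by
  have key : ∀ a b : ℝ, |Ginv κ a - Ginv κ b| ≤ (Real.sqrt (1/6))⁻¹ * |a - b| := by
    intro a b
    have h1 : Real.sqrt (1/6) * |Ginv κ a - Ginv κ b| ≤ |a - b| := by
      rcases le_total (Ginv κ b) (Ginv κ a) with h | h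
      · have h2 := (Gfun_sub_bounds hκ h).1
        rw [Gfun_Ginv hκ, Gfun_Ginv hκ] at h2
        rw [abs_of_nonneg (by linarith)]
        calc Real.sqrt (1/6) * (Ginv κ a - Ginv κ b) ≤ a - b := h2
          _ ≤ |a - b| := le_abs_self _
      · have h2 := (Gfun_sub_bounds hκ h).1
        rw [Gfun_Ginv hκ, Gfun_Ginv hκ] at h2
        rw [abs_of_nonpos (by linarith), abs_sub_comm]
        calc Real.sqrt (1/6) * -(Ginv κ a - Ginv κ b) = Real.sqrt (1/6) * (Ginv κ b - Ginv κ a) := by ring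
          _ ≤ b - a := h2
          _ ≤ |b - a| := le_abs_self _
    rw [inv_mul_eq_div, le_div_iff₀ c_pos, mul_comm]
    exact h1

  apply LipschitzWith.continuous (K := Real.toNNReal (Real.sqrt (1/6))⁻¹)
  intro a b
  simp only [edist_dist, Real.dist_eq]
  rw [← ENNReal.ofReal_coe_nnreal, ← ENNReal.ofReal_mul (by positivity)]
  apply ENNReal.ofReal_le_ofReal
  rw [Real.coe_toNNReal _ (by positivity)]
  exact key a b

lemma f_deriv_tendsto {f : ℝ → ℝ} {β μ₂ : ℝ} (hβ : 2 < β) (hμ₂ : 0 < μ₂)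
    (hdinf : Tendsto (fun t : ℝ => deriv f t / t ^ (β - 2)) atTop (𝓝 (μ₂ * (β - 1)))) :
    Tendsto (deriv f) atTop atTop := by
  have hL : 0 < μ₂ * (β - 1) := by nlinarith
  have hpow : Tendsto (fun t : ℝ => t ^ (β - 2)) atTop atTop :=
    tendsto_rpow_atTop (by linarith)
  have := Filter.Tendsto.pos_mul_atTop hL hdinf hpow
  apply this.congr'
  filter_upwards [eventually_gt_atTop (0:ℝ)] with t ht
  rw [div_mul_cancel₀]
  exact ne_of_gt (Real.rpow_pos_of_pos ht _)

lemma f_grow {f : ℝ → ℝ} (hf1 : ContDiffOn ℝ 1 f (Set.Ici (0 : ℝ)))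
    {t₀ M : ℝ} (ht₀ : 0 < t₀) (hM : ∀ t, t₀ ≤ t → M ≤ deriv f t) :
    ∀ t, t₀ ≤ t → f t₀ + M * (t - t₀) ≤ f t := by
  intro t ht
  have hdiff : ∀ x ∈ Set.Ioi t₀, DifferentiableAt ℝ f x := by
    intro x hx
    exact (hf1.differentiableOn one_ne_zero).differentiableAt
      (Ici_mem_nhds (by simp at hx; linarith))
  have hmono : MonotoneOn (fun x => f x - M * x) (Set.Ici t₀) := by
    apply monotoneOn_of_deriv_nonneg (convex_Ici t₀)
    · apply ContinuousOn.sub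
      · exact (hf1.continuousOn).mono (Set.Ici_subset_Ici.2 (le_of_lt ht₀))
      · exact (continuous_const.mul continuous_id).continuousOn
    · rw [interior_Ici]
      intro x hx
      exact ((hdiff x hx).sub (differentiableAt_id.const_mul M)).differentiableWithinAt
    · rw [interior_Ici]
      intro x hx
      have hd : HasDerivAt (fun x => f x - M * x) (deriv f x - M) x :=
        (hdiff x hx).hasDerivAt.sub (by simpa using (hasDerivAt_id x).const_mul M)
      rw [hd.deriv]
      have := hM x (le_of_lt hx)
      linarith
  have := hmono (Set.self_mem_Ici) (Set.mem_Ici.2 ht) ht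
  simp only at this
  linarith

lemma hlam_lower {κ : ℝ} (hκ : 0 < κ) {f : ℝ → ℝ} {lam : ℝ} (hlam_pos : 0 < lam)
    {s : ℝ} (hs : 0 ≤ s) (hfnn : 0 ≤ f (Ginv κ s)) :
    f (Ginv κ s) - 5 * lam * s ≤ hlam κ f lam s := by
  set u := Ginv κ s with hu
  set g₀ := gfun κ u with hg₀
  have hgb := gfun_bounds hκ u
  have hg₀pos : 0 < g₀ := lt_of_lt_of_le c_pos hgb.1
  have hub := Ginv_bounds hκ hs
  have hun : 0 ≤ u := Ginv_nonneg hκ hs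
  have h1 : f u ≤ f u / g₀ := by
    rw [le_div_iff₀ hg₀pos]
    nlinarith [hgb.2]
  have h2 : lam * u / g₀ ≤ 6 * lam * s := by
    rw [div_le_iff₀ hg₀pos]
    rw [← hu] at hub
    have key : (Real.sqrt (1/6) * u) * Real.sqrt (1/6) ≤ s * g₀ :=
      mul_le_mul hub.2 hgb.1 (le_of_lt c_pos) hs
    have e1 : (Real.sqrt (1/6) * u) * Real.sqrt (1/6) = u / 6 := by
      linear_combination u * c_sq
    rw [e1] at key
    nlinarith [mul_le_mul_of_nonneg_left key (le_of_lt hlam_pos)]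
  unfold hlam
  rw [← hu, ← hg₀]
  linarith

lemma hlam_integrable {κ : ℝ} (hκ : 0 < κ) {f : ℝ → ℝ}
    (hf1 : ContDiffOn ℝ 1 f (Set.Ici (0 : ℝ))) {lam : ℝ} (hlam_pos : 0 < lam)
    {b : ℝ} (hb : 0 ≤ b) :
    IntervalIntegrable (hlam κ f lam) MeasureTheory.volume 0 b := by
  have contf : ContinuousOn (fun s => f (Ginv κ s)) (Set.Icc 0 b) := by
    apply hf1.continuousOn.comp (Ginv_continuous hκ).continuousOn
    exact fun s hs => Ginv_nonneg hκ hs.1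
  obtain ⟨C, hC⟩ := isCompact_Icc.exists_bound_of_continuousOn contf
  have meas_g : Measurable fun s => gfun κ (Ginv κ s) :=
    (gfun_measurable κ).comp (Ginv_continuous hκ).measurable
  have hm : MeasureTheory.AEStronglyMeasurable (hlam κ f lam)
      (MeasureTheory.volume.restrict (Set.Ioc 0 b)) := by
    have h1 : MeasureTheory.AEStronglyMeasurable (fun s => f (Ginv κ s))
        (MeasureTheory.volume.restrict (Set.Ioc 0 b)) :=
      (contf.mono Set.Ioc_subset_Icc_self).aestronglyMeasurable measurableSet_Ioc
    have h1' : AEMeasurable (fun s => f (Ginv κ s))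
        (MeasureTheory.volume.restrict (Set.Ioc 0 b)) := h1.aemeasurable
    have h2' : AEMeasurable (fun s => gfun κ (Ginv κ s))
        (MeasureTheory.volume.restrict (Set.Ioc 0 b)) := meas_g.aemeasurable
    have h3' : AEMeasurable (fun s => lam * Ginv κ s)
        (MeasureTheory.volume.restrict (Set.Ioc 0 b)) :=
      (measurable_const.mul (Ginv_continuous hκ).measurable).aemeasurable
    have h4' : AEMeasurable (fun s : ℝ => lam * s)
        (MeasureTheory.volume.restrict (Set.Ioc 0 b)) :=
      (measurable_const.mul measurable_id).aemeasurable
    exact (((h1'.div h2').sub (h3'.div h2')).add h4').aestronglyMeasurable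
  set Cb : ℝ := |C| / Real.sqrt (1/6) + 6 * lam * b + lam * b with hCb
  have hbdd : ∀ᵐ x ∂(MeasureTheory.volume.restrict (Set.Ioc 0 b)), ‖hlam κ f lam x‖ ≤ Cb := by
    rw [MeasureTheory.ae_restrict_iff' measurableSet_Ioc]
    apply MeasureTheory.ae_of_all
    intro x hx
    have hx0 : 0 ≤ x := le_of_lt hx.1
    have hxb : x ≤ b := hx.2
    set u := Ginv κ x with hu
    set g₀ := gfun κ u with hg₀
    have hgb := gfun_bounds hκ u
    have hg₀pos : 0 < g₀ := lt_of_lt_of_le c_pos hgb.1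
    have hun : 0 ≤ u := Ginv_nonneg hκ hx0
    have hub := Ginv_bounds hκ hx0
    rw [← hu] at hub
    have hfb : |f u| ≤ |C| := le_trans (hC _ ⟨hx0, hxb⟩) (le_abs_self C)
    have e1 : |f u / g₀| ≤ |C| / Real.sqrt (1/6) := by
      rw [abs_div, abs_of_pos hg₀pos]
      exact div_le_div₀ (abs_nonneg C) hfb c_pos hgb.1
    have e2 : |lam * u / g₀| ≤ 6 * lam * b := by
      rw [abs_of_nonneg (by positivity)]
      rw [div_le_iff₀ hg₀pos]
      have key : (Real.sqrt (1/6) * u) * Real.sqrt (1/6) ≤ b * g₀ :=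
        mul_le_mul (hub.2.trans hxb) hgb.1 (le_of_lt c_pos) hb
      have e1' : (Real.sqrt (1/6) * u) * Real.sqrt (1/6) = u / 6 := by
        linear_combination u * c_sq
      rw [e1'] at key
      nlinarith [mul_le_mul_of_nonneg_left key (le_of_lt hlam_pos)]
    have e3 : |lam * x| ≤ lam * b := by
      rw [abs_of_nonneg (by positivity)]
      nlinarith
    have : ‖hlam κ f lam x‖ ≤ |f u / g₀| + |lam * u / g₀| + |lam * x| := by
      unfold hlam
      rw [← hu, ← hg₀, Real.norm_eq_abs]
      calc |f u / g₀ - lam * u / g₀ + lam * x| ≤ |f u / g₀ - lam * u / g₀| + |lam * x| := abs_add_le _ _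
        _ ≤ |f u / g₀| + |lam * u / g₀| + |lam * x| := by
            have := abs_sub (f u / g₀) (lam * u / g₀); linarith
    rw [hCb]; linarith
  rw [intervalIntegrable_iff, Set.uIoc_of_le hb]
  exact ⟨hm, MeasureTheory.HasFiniteIntegral.restrict_of_bounded (C := Cb)
    (measure_Ioc_lt_top) hbdd⟩

lemma hlam_eventually {κ : ℝ} (hκ : 0 < κ) {f : ℝ → ℝ}
    (hf1 : ContDiffOn ℝ 1 f (Set.Ici (0 : ℝ))) (hf0 : f 0 = 0)
    (hfpos : ∀ s : ℝ, 0 < s → 0 < f s)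
    {lam : ℝ} (hlam_pos : 0 < lam)
    (hderiv : Tendsto (deriv f) atTop atTop) (M : ℝ) :
    ∀ᶠ s in atTop, M * s ≤ hlam κ f lam s := by
  have hfnn : ∀ t : ℝ, 0 ≤ t → 0 ≤ f t := by
    intro t ht
    rcases ht.eq_or_lt with h | h
    · rw [← h, hf0]
    · exact (hfpos t h).le
  set M' : ℝ := |M| + 5 * lam + 1 with hM'
  have hM'pos : 0 < M' := by positivity
  obtain ⟨t₁, ht₁⟩ := (tendsto_atTop.1 hderiv M').exists_forall_of_atTop
  set t₀ : ℝ := max t₁ 1 with ht₀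
  have ht₀pos : (0:ℝ) < t₀ := lt_of_lt_of_le one_pos (le_max_right _ _)
  have hMd : ∀ t, t₀ ≤ t → M' ≤ deriv f t := fun t ht =>
    ht₁ t (le_trans (le_max_left _ _) ht)
  have hgrow := f_grow hf1 ht₀pos hMd
  filter_upwards [eventually_ge_atTop t₀, eventually_ge_atTop (M' * t₀)] with s hs1 hs2
  have hs0 : 0 ≤ s := le_trans ht₀pos.le hs1
  have hub := Ginv_bounds hκ hs0
  have hu : t₀ ≤ Ginv κ s := le_trans hs1 hub.1
  have hfu := hgrow _ hu
  have hft₀ : 0 ≤ f t₀ := hfnn t₀ ht₀pos.le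
  have hlow := hlam_lower hκ hlam_pos hs0
    (le_trans (by positivity : (0:ℝ) ≤ 0) (hfnn _ (le_trans ht₀pos.le hu)))
  have h1 : M' * (s - t₀) ≤ f (Ginv κ s) := by
    nlinarith [hub.1]
  have hMabs : M * s ≤ |M| * s := mul_le_mul_of_nonneg_right (le_abs_self M) hs0
  nlinarith [hlow]


/-- under (F1)-(F2), for every `λ > 0`,
`(∫ τ in [0,t], h_λ τ) / t² → +∞` as `t → +∞`; consequently there is `T > 0` with
`∫ τ in [0,T], h_λ τ > (λ/2) T²`. -/
theorem stmt_17 (N : ℕ) (hN : 3 ≤ N) (f : ℝ → ℝ)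
    (hf1 : ContDiffOn ℝ 1 f (Set.Ici (0 : ℝ))) (hf0 : f 0 = 0)
    (hfpos : ∀ s : ℝ, 0 < s → 0 < f s)
    (α β μ₁ μ₂ : ℝ)
    (hα : 2 < α ∧ α < 2 * N / (N - 2)) (hβ : 2 < β ∧ β < 2 * N / (N - 2))
    (hμ₁ : 0 < μ₁) (hμ₂ : 0 < μ₂)
    (hd0 : Tendsto (fun t : ℝ => deriv f t / t ^ (α - 2)) (𝓝[>] (0 : ℝ))
      (𝓝 (μ₁ * (α - 1))))
    (hdinf : Tendsto (fun t : ℝ => deriv f t / t ^ (β - 2)) atTop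
      (𝓝 (μ₂ * (β - 1))))
    (κ : ℝ) (hκ : 0 < κ) (lam : ℝ) (hlam_pos : 0 < lam) :
    Tendsto (fun t : ℝ => (∫ τ in (0:ℝ)..t, hlam κ f lam τ) / t ^ 2) atTop atTop ∧
      ∃ T : ℝ, 0 < T ∧ lam / 2 * T ^ 2 < ∫ τ in (0:ℝ)..T, hlam κ f lam τ := by
  have hderiv : Tendsto (deriv f) atTop atTop := f_deriv_tendsto hβ.1 hμ₂ hdinf
  have hmain : Tendsto (fun t : ℝ => (∫ τ in (0:ℝ)..t, hlam κ f lam τ) / t ^ 2) atTop atTop := by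
    rw [tendsto_atTop]
    intro b
    set M : ℝ := 2 * (|b| + 1) with hM
    obtain ⟨s₀', hs₀'⟩ :=
      (hlam_eventually hκ hf1 hf0 hfpos hlam_pos hderiv M).exists_forall_of_atTop
    set s₀ : ℝ := max s₀' 0 with hs₀
    have hs₀0 : 0 ≤ s₀ := le_max_right _ _
    set C₀ : ℝ := ∫ τ in (0:ℝ)..s₀, hlam κ f lam τ with hC₀
    set D : ℝ := C₀ - M * s₀ ^ 2 / 2 with hD
    have haux : Tendsto (fun t : ℝ => M / 2 + D / t ^ 2) atTop (𝓝 (M / 2 + 0)) := by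
      apply Tendsto.add tendsto_const_nhds
      exact Tendsto.div_atTop tendsto_const_nhds (tendsto_pow_atTop two_ne_zero)
    have hgt : b < M / 2 + 0 := by
      rw [add_zero, hM]
      have := le_abs_self b; linarith
    filter_upwards [haux.eventually (eventually_gt_nhds hgt), eventually_ge_atTop s₀,
      eventually_ge_atTop (1:ℝ)] with t hev hts ht1
    have ht0 : 0 < t := lt_of_lt_of_le one_pos ht1
    have ht2 : 0 < t ^ 2 := by positivity
    have hint0t : IntervalIntegrable (hlam κ f lam) MeasureTheory.volume 0 t :=
      hlam_integrable hκ hf1 hlam_pos (le_trans hs₀0 hts)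
    have hint0s : IntervalIntegrable (hlam κ f lam) MeasureTheory.volume 0 s₀ :=
      hlam_integrable hκ hf1 hlam_pos hs₀0
    have hintst : IntervalIntegrable (hlam κ f lam) MeasureTheory.volume s₀ t := by
      apply hint0t.mono_set
      rw [Set.uIcc_of_le hts, Set.uIcc_of_le (le_trans hs₀0 hts)]
      exact Set.Icc_subset_Icc hs₀0 le_rfl
    have hsplit : (∫ τ in (0:ℝ)..t, hlam κ f lam τ)
        = C₀ + ∫ τ in s₀..t, hlam κ f lam τ := by
      rw [hC₀]
      rw [intervalIntegral.integral_add_adjacent_intervals hint0s hintst]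
    have hcmp : M * (t ^ 2 - s₀ ^ 2) / 2 ≤ ∫ τ in s₀..t, hlam κ f lam τ := by
      have h1 : (∫ τ in s₀..t, M * τ) ≤ ∫ τ in s₀..t, hlam κ f lam τ := by
        apply intervalIntegral.integral_mono_on hts
          ((continuous_const.mul continuous_id).intervalIntegrable _ _) hintst
        intro x hx
        exact hs₀' x (le_trans (le_max_left _ _) hx.1)
      have h2 : (∫ τ in s₀..t, M * τ) = M * (t ^ 2 - s₀ ^ 2) / 2 := by
        rw [intervalIntegral.integral_const_mul, integral_id]; ring
      linarith
    have hfinal : M / 2 + D / t ^ 2 ≤ (∫ τ in (0:ℝ)..t, hlam κ f lam τ) / t ^ 2 := by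
      rw [hsplit]
      rw [div_add_div _ _ (ne_of_gt (by norm_num : (0:ℝ) < 2)) (ne_of_gt ht2)]
      rw [div_le_div_iff₀ (by positivity) ht2]
      rw [hD]
      nlinarith [mul_le_mul_of_nonneg_right hcmp ht2.le]
    linarith [hev]
  refine ⟨hmain, ?_⟩
  obtain ⟨T, hT⟩ := ((tendsto_atTop.1 hmain (lam / 2 + 1)).and (eventually_ge_atTop 1)).exists
  have hT0 : (0:ℝ) < T := lt_of_lt_of_le one_pos hT.2
  refine ⟨T, hT0, ?_⟩
  have hT2 : (0:ℝ) < T ^ 2 := by positivity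
  have := (le_div_iff₀ hT2).1 hT.1
  nlinarith
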